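/- Let (X^ε, Ω, P^ε) be an irreducible, OM-reversible parametrized family of Markov chains on a finite state space with stationary distributions π^ε whose entries have integer orders of magnitude φ(π(x)). Then for all x, y ∈ Ω with P(x,y) > 0, φ(P(x,y)) − φ(P(y,x)) = φ(π(y)) − φ(π(x)); in particular, if φ(π(y)) > φ(π(x)) then φ(P(x,y)) ≥ 1, so the probability of a transition from x to y is at least one order of magnitude in ε smaller than the probability of a transition from y to x. -/

import Mathlib

open Finset

/-- `f` is `Θ(ε^k)` as `ε → 0⁺`: there are positive constants `M₁, M₂, ε̄` with
`M₁ ε^k ≤ f ε ≤ M₂ ε^k` for all `0 < ε < ε̄`. -/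
def IsTheta (f : ℝ → ℝ) (k : ℤ) : Prop :=
  ∃ M₁ M₂ εbar : ℝ, 0 < M₁ ∧ 0 < M₂ ∧ 0 < εbar ∧
    ∀ ε : ℝ, 0 < ε → ε < εbar → M₁ * ε ^ k ≤ f ε ∧ f ε ≤ M₂ * ε ^ k

/-- `P(u,v) > 0` in the order-of-magnitude sense: `ε ↦ P^ε(u,v)` is `Θ(ε^k)`
for some integer `k`. -/
def EPos {Ω : Type*} (P : ℝ → Ω → Ω → ℝ) (u v : Ω) : Prop :=
  ∃ k : ℤ, IsTheta (fun ε => P ε u v) k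

lemma IsTheta.mul' {f g : ℝ → ℝ} {k l : ℤ} (hf : IsTheta f k) (hg : IsTheta g l) :
    IsTheta (fun ε => f ε * g ε) (k + l) := by
  obtain ⟨a1, a2, e1, ha1, ha2, he1, hfb⟩ := hf
  obtain ⟨b1, b2, e2, hb1, hb2, he2, hgb⟩ := hg
  refine ⟨a1 * b1, a2 * b2, min e1 e2, by positivity, by positivity, by positivity, ?_⟩
  intro ε hε hlt
  obtain ⟨hf1, hf2⟩ := hfb ε hε (lt_of_lt_of_le hlt (min_le_left _ _))
  obtain ⟨hg1, hg2⟩ := hgb ε hε (lt_of_lt_of_le hlt (min_le_right _ _))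
  have hεk : (0:ℝ) < ε ^ k := zpow_pos hε k
  have hεl : (0:ℝ) < ε ^ l := zpow_pos hε l
  have hfpos : (0:ℝ) ≤ f ε := le_trans (by positivity) hf1
  have hgpos : (0:ℝ) ≤ g ε := le_trans (by positivity) hg1
  constructor
  · calc a1 * b1 * ε ^ (k + l) = (a1 * ε ^ k) * (b1 * ε ^ l) := by
          rw [zpow_add₀ hε.ne']; ring
    _ ≤ f ε * g ε := mul_le_mul hf1 hg1 (by positivity) hfpos
  · calc f ε * g ε ≤ (a2 * ε ^ k) * (b2 * ε ^ l) :=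
          mul_le_mul hf2 hg2 hgpos (by positivity)
    _ = a2 * b2 * ε ^ (k + l) := by rw [zpow_add₀ hε.ne']; ring

lemma exists_exit {Ω : Type*} {Q : Ω → Prop} {c : ℕ → Ω} :
    ∀ r : ℕ, Q (c 0) → ¬ Q (c r) → ∃ i < r, Q (c i) ∧ ¬ Q (c (i + 1)) := by
  intro r
  induction r with
  | zero => intro h0 hr; exact absurd h0 hr
  | succ n ih =>
    intro h0 hr
    by_cases hn : Q (c n)
    · exact ⟨n, Nat.lt_succ_self n, hn, hr⟩
    · obtain ⟨i, hi, h⟩ := ih h0 hn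
      exact ⟨i, Nat.lt_succ_of_lt hi, h⟩

/-- Geometric characterization: for an irreducible, OM-reversible family with stationary
distributions of integer orders of magnitude, `φ(P(x,y)) − φ(P(y,x)) = φ(π(y)) − φ(π(x))`
whenever `P(x,y) > 0`; in particular, if `φ(π(y)) > φ(π(x))` then `φ(P(x,y)) ≥ 1`, i.e. the
transition `x → y` is at least one order of magnitude less likely than `y → x`. -/
theorem OM_reversible_upward_transitions_are_less_likely
    {Ω : Type*} [Fintype Ω] (P : ℝ → Ω → Ω → ℝ)
    (hstoch : ∀ ε : ℝ, 0 < ε → (∀ u v : Ω, 0 ≤ P ε u v) ∧ ∀ u : Ω, ∑ v, P ε u v = 1)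
    (hzero : ∀ u v : Ω, ¬ EPos P u v →
      ∃ εbar > (0 : ℝ), ∀ ε : ℝ, 0 < ε → ε < εbar → P ε u v = 0)
    (hsym : ∀ u v : Ω, EPos P u v ↔ EPos P v u)
    (φP : Ω → Ω → ℤ)
    (hφP : ∀ u v : Ω, EPos P u v → IsTheta (fun ε => P ε u v) (φP u v))
    (hirr : ∀ u v : Ω, ∃ (r : ℕ) (c : ℕ → Ω),
      c 0 = u ∧ c r = v ∧ ∀ i < r, EPos P (c i) (c (i + 1)))
    (homrev : ∃ ν : Ω → ℤ, ∀ u v : Ω, EPos P u v → ν u + φP u v = ν v + φP v u)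
    (π : ℝ → Ω → ℝ)
    (hstat : ∀ ε : ℝ, 0 < ε → (∀ x : Ω, 0 ≤ π ε x) ∧ (∑ x, π ε x) = 1 ∧
      ∀ y : Ω, (∑ x, π ε x * P ε x y) = π ε y)
    (φπ : Ω → ℤ)
    (hφπ : ∀ x : Ω, IsTheta (fun ε => π ε x) (φπ x)) :
    ∀ x y : Ω, EPos P x y →
      φP x y - φP y x = φπ y - φπ x ∧ (φπ x < φπ y → 1 ≤ φP x y) := by
  classical
  obtain ⟨ν, hν⟩ := homrev
  set d : Ω → ℤ := fun z => φπ z - ν z with hd_def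
  -- Nonnegativity of transition orders.
  have hφPnn : ∀ u v : Ω, EPos P u v → 0 ≤ φP u v := by
    intro u v h
    by_contra hneg
    push_neg at hneg
    obtain ⟨a1, a2, e, ha1, ha2, he, hb⟩ := hφP u v h
    set ε : ℝ := min e (min 1 a1) / 2 with hε_def
    have hεpos : 0 < ε := by positivity
    have hεlt : ε < e := by
      have : min e (min 1 a1) / 2 < min e (min 1 a1) := by
        have : 0 < min e (min 1 a1) := by positivity
        linarith
      exact lt_of_lt_of_le this (min_le_left _ _)
    have hε1 : ε ≤ 1 := by
      have h2 : min e (min 1 a1) ≤ 1 := le_trans (min_le_right _ _) (min_le_left _ _)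
      have : 0 < min e (min 1 a1) := by positivity
      rw [hε_def]; linarith
    have hεa1 : ε < a1 := by
      have h2 : min e (min 1 a1) ≤ a1 := le_trans (min_le_right _ _) (min_le_right _ _)
      have : 0 < min e (min 1 a1) := by positivity
      rw [hε_def]; linarith
    have hub : P ε u v ≤ 1 := by
      obtain ⟨hnn, hsum⟩ := hstoch ε hεpos
      calc P ε u v ≤ ∑ w, P ε u w :=
            Finset.single_le_sum (fun i _ => hnn u i) (Finset.mem_univ v)
      _ = 1 := hsum u
    have hlb := (hb ε hεpos hεlt).1
    have hmono : ε ^ (-1 : ℤ) ≤ ε ^ (φP u v) :=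
      zpow_le_zpow_right_of_le_one₀ hεpos hε1 (by omega)
    have h1 : a1 * ε ^ (-1 : ℤ) ≤ 1 := by
      calc a1 * ε ^ (-1 : ℤ) ≤ a1 * ε ^ (φP u v) :=
            mul_le_mul_of_nonneg_left hmono (le_of_lt ha1)
      _ ≤ P ε u v := hlb
      _ ≤ 1 := hub
    rw [zpow_neg_one] at h1
    have : a1 ≤ ε := by
      have := mul_le_mul_of_nonneg_right h1 (le_of_lt hεpos)
      rw [one_mul, mul_assoc, inv_mul_cancel₀ hεpos.ne', mul_one] at this
      exact this
    linarith
  -- Key quantitative fact per ordered pair.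
  have hQ : ∀ u v : Ω, ∃ t : ℝ, 0 < t ∧ ∀ ε : ℝ, 0 < ε → ε < t →
      (¬ EPos P u v → P ε u v = 0) ∧
      (EPos P u v → d v < d u → π ε u * P ε u v < π ε v * P ε v u) := by
    intro u v
    by_cases h : EPos P u v
    · have hvu : EPos P v u := (hsym u v).mp h
      obtain ⟨a1, a2, e1, ha1, ha2, he1, hbu⟩ := (hφπ u).mul' (hφP u v h)
      obtain ⟨b1, b2, e2, hb1, hb2, he2, hbv⟩ := (hφπ v).mul' (hφP v u hvu)
      refine ⟨min (min e1 e2) (min 1 (b1 / a2)), by positivity, ?_⟩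
      intro ε hεpos hεlt
      refine ⟨fun hc => absurd h hc, fun _ hdlt => ?_⟩
      have hεe1 : ε < e1 := lt_of_lt_of_le hεlt (le_trans (min_le_left _ _) (min_le_left _ _))
      have hεe2 : ε < e2 := lt_of_lt_of_le hεlt (le_trans (min_le_left _ _) (min_le_right _ _))
      have hε1 : ε ≤ 1 :=
        le_of_lt (lt_of_lt_of_le hεlt (le_trans (min_le_right _ _) (min_le_left _ _)))
      have hεb : ε < b1 / a2 :=
        lt_of_lt_of_le hεlt (le_trans (min_le_right _ _) (min_le_right _ _))
      have hub := (hbu ε hεpos hεe1).2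
      have hlb := (hbv ε hεpos hεe2).1
      have hrev := hν u v h
      have hexp : φπ v + φP v u + 1 ≤ φπ u + φP u v := by
        simp only [hd_def] at hdlt; omega
      have hmono : ε ^ (φπ u + φP u v) ≤ ε ^ (φπ v + φP v u + 1) :=
        zpow_le_zpow_right_of_le_one₀ hεpos hε1 hexp
      have hεk : (0:ℝ) < ε ^ (φπ v + φP v u) := zpow_pos hεpos _
      have hstep : a2 * ε ^ (φπ v + φP v u + 1) < b1 * ε ^ (φπ v + φP v u) := by
        rw [zpow_add₀ hεpos.ne' _ 1, zpow_one]
        have hlt : a2 * ε < b1 := by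
          rw [lt_div_iff₀ ha2] at hεb
          linarith [hεb]
        calc a2 * (ε ^ (φπ v + φP v u) * ε) = (a2 * ε) * ε ^ (φπ v + φP v u) := by ring
        _ < b1 * ε ^ (φπ v + φP v u) := mul_lt_mul_of_pos_right hlt hεk
      calc π ε u * P ε u v ≤ a2 * ε ^ (φπ u + φP u v) := hub
      _ ≤ a2 * ε ^ (φπ v + φP v u + 1) := mul_le_mul_of_nonneg_left hmono (le_of_lt ha2)
      _ < b1 * ε ^ (φπ v + φP v u) := hstep
      _ ≤ π ε v * P ε v u := hlb
    · obtain ⟨e, he, hz⟩ := hzero u v h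
      exact ⟨e, he, fun ε hεpos hεlt => ⟨fun _ => hz ε hεpos hεlt, fun hc => absurd hc h⟩⟩
  -- `d` is constant.
  have hkey : ∀ u v : Ω, d u = d v := by
    by_contra hc
    push_neg at hc
    obtain ⟨u0, v0, huv⟩ := hc
    have hne : Nonempty Ω := ⟨u0⟩
    have hun : (Finset.univ : Finset Ω).Nonempty := Finset.univ_nonempty
    set M : ℤ := Finset.univ.sup' hun d with hM_def
    obtain ⟨a0, -, ha0⟩ := Finset.exists_mem_eq_sup' hun d
    have hdle : ∀ z : Ω, d z ≤ M := fun z => Finset.le_sup' d (Finset.mem_univ z)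
    -- some vertex not at the max
    have hbex : ∃ b : Ω, d b ≠ M := by
      by_contra hball
      push_neg at hball
      exact huv ((hball u0).trans (hball v0).symm)
    obtain ⟨b0, hb0⟩ := hbex
    -- uniform threshold
    choose t ht hQ' using hQ
    set A : Finset Ω := Finset.univ.filter (fun z => d z = M) with hA_def
    set B : Finset Ω := Finset.univ.filter (fun z => ¬ d z = M) with hB_def
    have hprodne : (Finset.univ : Finset (Ω × Ω)).Nonempty := Finset.univ_nonempty
    set ε0 : ℝ := Finset.univ.inf' hprodne (fun p : Ω × Ω => t p.1 p.2) with hε0_def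
    have hε0pos : 0 < ε0 := by
      rw [hε0_def, Finset.lt_inf'_iff]
      exact fun p _ => ht p.1 p.2
    set εv : ℝ := ε0 / 2 with hεv_def
    have hεvpos : 0 < εv := by positivity
    have hεvlt : ∀ p q : Ω, εv < t p q := by
      intro p q
      have h1 : ε0 ≤ t p q := Finset.inf'_le _ (Finset.mem_univ (p, q))
      rw [hεv_def]; linarith
    have hQv := fun p q => hQ' p q εv hεvpos (hεvlt p q)
    obtain ⟨hπnn, hπsum, hπstat⟩ := hstat εv hεvpos
    obtain ⟨hPnn, hPsum⟩ := hstoch εv hεvpos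
    set F : Ω → Ω → ℝ := fun p q => π εv p * P εv p q - π εv q * P εv q p with hF_def
    -- divergence zero
    have hdiv : ∀ p : Ω, ∑ q, F p q = 0 := by
      intro p
      have h1 : ∑ q, π εv p * P εv p q = π εv p := by
        rw [← Finset.mul_sum, hPsum p, mul_one]
      have h2 : ∑ q, π εv q * P εv q p = π εv p := hπstat p
      simp only [hF_def, Finset.sum_sub_distrib, h1, h2, sub_self]
    -- antisymmetry kills A×A
    have hAA : ∑ p ∈ A, ∑ q ∈ A, F p q = 0 := by
      have h3 : ∑ p ∈ A, ∑ q ∈ A, F p q = - ∑ p ∈ A, ∑ q ∈ A, F p q :=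
        calc ∑ p ∈ A, ∑ q ∈ A, F p q = ∑ q ∈ A, ∑ p ∈ A, F p q := Finset.sum_comm
        _ = ∑ q ∈ A, ∑ p ∈ A, (- F q p) := by
            refine Finset.sum_congr rfl fun q _ => Finset.sum_congr rfl fun p _ => ?_
            simp only [hF_def]; ring
        _ = - ∑ q ∈ A, ∑ p ∈ A, F q p :=
            (Finset.sum_congr rfl fun q _ => Finset.sum_neg_distrib _).trans
              (Finset.sum_neg_distrib _)
      linarith
    -- the cut sum is zero
    have hsplit : ∀ p : Ω, (∑ q ∈ A, F p q) + (∑ q ∈ B, F p q) = ∑ q, F p q := by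
      intro p
      exact Finset.sum_filter_add_sum_filter_not Finset.univ (fun z => d z = M) (F p)
    have hcut : ∑ p ∈ A, ∑ q ∈ B, F p q = 0 := by
      have h1 : ∑ p ∈ A, ((∑ q ∈ A, F p q) + (∑ q ∈ B, F p q)) = 0 := by
        rw [Finset.sum_congr rfl (fun p _ => (hsplit p).trans (hdiv p))]
        simp
      rw [Finset.sum_add_distrib, hAA, zero_add] at h1
      exact h1
    -- but all cut terms are ≤ 0, with one strictly negative
    have hdltAB : ∀ p ∈ A, ∀ q ∈ B, d q < d p := by
      intro p hp q hq
      rw [hA_def, Finset.mem_filter] at hp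
      rw [hB_def, Finset.mem_filter] at hq
      have h3 := hdle q
      rw [hp.2]
      omega
    have hterm : ∀ p ∈ A, ∀ q ∈ B, F p q ≤ 0 := by
      intro p hp q hq
      have hdlt := hdltAB p hp q hq
      by_cases h : EPos P p q
      · have := (hQv p q).2 h hdlt
        simp only [hF_def]
        linarith
      · have h1 : P εv p q = 0 := (hQv p q).1 h
        have h2 : P εv q p = 0 := (hQv q p).1 (fun hc => h ((hsym q p).mp hc))
        simp [hF_def, h1, h2]
    -- find a cut edge
    obtain ⟨r, c, hc0, hcr, hce⟩ := hirr a0 b0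
    have hQ0 : d (c 0) = M := by rw [hc0, ← ha0]
    have hQr : ¬ d (c r) = M := by rw [hcr]; exact hb0
    obtain ⟨i, hir, hQi, hQi1⟩ := exists_exit (Q := fun z => d z = M) (c := c) r hQ0 hQr
    have haA : c i ∈ A := by rw [hA_def, Finset.mem_filter]; exact ⟨Finset.mem_univ _, hQi⟩
    have hbB : c (i + 1) ∈ B := by
      rw [hB_def, Finset.mem_filter]; exact ⟨Finset.mem_univ _, hQi1⟩
    have hedge : EPos P (c i) (c (i + 1)) := hce i hir
    have hstrict : F (c i) (c (i + 1)) < 0 := by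
      have := (hQv (c i) (c (i + 1))).2 hedge (hdltAB _ haA _ hbB)
      simp only [hF_def]
      linarith
    -- strict negativity of the cut sum: contradiction
    have hlt : ∑ p ∈ A, ∑ q ∈ B, F p q < 0 := by
      rw [← Finset.sum_product']
      have h0 : (0:ℝ) = ∑ x ∈ A ×ˢ B, (fun _ : Ω × Ω => (0:ℝ)) x := by simp
      rw [h0]
      refine Finset.sum_lt_sum ?_ ?_
      · intro x hx
        rw [Finset.mem_product] at hx
        exact hterm x.1 hx.1 x.2 hx.2
      · exact ⟨(c i, c (i + 1)), Finset.mem_product.mpr ⟨haA, hbB⟩, hstrict⟩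
    rw [hcut] at hlt
    exact lt_irrefl 0 hlt
  -- conclude
  intro x y hxy
  have hyx : EPos P y x := (hsym x y).mp hxy
  have h1 := hν x y hxy
  have h2 : d x = d y := hkey x y
  simp only [hd_def] at h2
  refine ⟨by omega, fun hlt => ?_⟩
  have := hφPnn y x hyx
  omega
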